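/- Let U ⊆ ℂ^N be open and let b_1, …, b_N : U → ℂ be twice continuously differentiable (as functions of the underlying real variables). For a real-differentiable function f : U → ℂ define the Wirtinger derivatives ∂f/∂z_r := (1/2)(D_{e_r}f − i·D_{i·e_r}f) and ∂f/∂z̄_r := (1/2)(D_{e_r}f + i·D_{i·e_r}f), where D_v denotes the real directional derivative along v and e_r is the r-th standard basis vector of ℂ^N. Suppose the hermiticity condition ∂b_s/∂z_r = conj( ∂b_r/∂z_s ) holds on U for all r, s. Then for all r, s, t, the function c_{rs} := ∂b_r/∂z̄_s − ∂b_s/∂z̄_r satisfies ∂c_{rs}/∂z_t = 0 on U; that is, each c_{rs} is antiholomorphic on U. -/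

import Mathlib

/-- The Wirtinger derivative `∂f/∂z_r` of `f : ℂ^N → ℂ` at `z`, defined via
real directional derivatives: `(1/2)(D_{e_r}f − i·D_{i e_r}f)`. -/
noncomputable def wirtingerD {N : ℕ} (r : Fin N) (f : (Fin N → ℂ) → ℂ)
    (z : Fin N → ℂ) : ℂ :=
  (1 / 2 : ℂ) * (fderiv ℝ f z (Pi.single r 1)
    - Complex.I * fderiv ℝ f z (Pi.single r Complex.I))

/-- The conjugate Wirtinger derivative `∂f/∂z̄_r` of `f : ℂ^N → ℂ` at `z`:
`(1/2)(D_{e_r}f + i·D_{i e_r}f)`. -/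
noncomputable def wirtingerDBar {N : ℕ} (r : Fin N) (f : (Fin N → ℂ) → ℂ)
    (z : Fin N → ℂ) : ℂ :=
  (1 / 2 : ℂ) * (fderiv ℝ f z (Pi.single r 1)
    + Complex.I * fderiv ℝ f z (Pi.single r Complex.I))


variable {N : ℕ}


/-- derivative of `w ↦ fderiv ℝ f w v` at `z` for `C²` f -/
lemma hasFDerivAt_fderiv_apply {f : (Fin N → ℂ) → ℂ} {z : Fin N → ℂ}
    (hf : ContDiffAt ℝ 2 f z) (v : Fin N → ℂ) :
    HasFDerivAt (fun w => fderiv ℝ f w v)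
      ((ContinuousLinearMap.apply ℝ ℂ v).comp (fderiv ℝ (fderiv ℝ f) z)) z := by
  have h1 : ContDiffAt ℝ 1 (fderiv ℝ f) z := hf.fderiv_right (by norm_num)
  have h2 : DifferentiableAt ℝ (fderiv ℝ f) z := h1.differentiableAt one_ne_zero
  exact (ContinuousLinearMap.apply ℝ ℂ v).hasFDerivAt.comp z h2.hasFDerivAt

lemma hasFDerivAt_wirtingerD {f : (Fin N → ℂ) → ℂ} {z : Fin N → ℂ}
    (hf : ContDiffAt ℝ 2 f z) (r : Fin N) :
    HasFDerivAt (fun w => wirtingerD r f w)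
      ((1/2 : ℂ) • ((ContinuousLinearMap.apply ℝ ℂ (Pi.single r 1)).comp
          (fderiv ℝ (fderiv ℝ f) z)
        - Complex.I • (ContinuousLinearMap.apply ℝ ℂ (Pi.single r Complex.I)).comp
          (fderiv ℝ (fderiv ℝ f) z))) z := by
  have H1 := hasFDerivAt_fderiv_apply hf (Pi.single r 1)
  have H2 := hasFDerivAt_fderiv_apply hf (Pi.single r Complex.I)
  exact (H1.sub (H2.const_mul Complex.I)).const_mul (1/2 : ℂ)

lemma hasFDerivAt_wirtingerDBar {f : (Fin N → ℂ) → ℂ} {z : Fin N → ℂ}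
    (hf : ContDiffAt ℝ 2 f z) (r : Fin N) :
    HasFDerivAt (fun w => wirtingerDBar r f w)
      ((1/2 : ℂ) • ((ContinuousLinearMap.apply ℝ ℂ (Pi.single r 1)).comp
          (fderiv ℝ (fderiv ℝ f) z)
        + Complex.I • (ContinuousLinearMap.apply ℝ ℂ (Pi.single r Complex.I)).comp
          (fderiv ℝ (fderiv ℝ f) z))) z := by
  have H1 := hasFDerivAt_fderiv_apply hf (Pi.single r 1)
  have H2 := hasFDerivAt_fderiv_apply hf (Pi.single r Complex.I)
  exact (H1.add (H2.const_mul Complex.I)).const_mul (1/2 : ℂ)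

lemma fderiv_conj_apply {g : (Fin N → ℂ) → ℂ} {z : Fin N → ℂ}
    (hg : DifferentiableAt ℝ g z) (u : Fin N → ℂ) :
    fderiv ℝ (fun w => (starRingEnd ℂ) (g w)) z u = (starRingEnd ℂ) (fderiv ℝ g z u) := by
  have h := (Complex.conjCLE.hasFDerivAt.comp z hg.hasFDerivAt).fderiv
  rw [show (fun w => (starRingEnd ℂ) (g w)) = Complex.conjCLE ∘ g from rfl, h]
  simp

lemma fderiv_wirtingerD_apply {f : (Fin N → ℂ) → ℂ} {z : Fin N → ℂ}
    (hf : ContDiffAt ℝ 2 f z) (r : Fin N) (u : Fin N → ℂ) :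
    fderiv ℝ (fun w => wirtingerD r f w) z u
      = (1/2 : ℂ) * (fderiv ℝ (fderiv ℝ f) z u (Pi.single r 1)
        - Complex.I * fderiv ℝ (fderiv ℝ f) z u (Pi.single r Complex.I)) := by
  rw [(hasFDerivAt_wirtingerD hf r).fderiv]
  simp


/-- If `b_1, …, b_N : U → ℂ` are `C²` on an open set `U ⊆ ℂ^N` and satisfy
the hermiticity condition `∂b_s/∂z_r = conj(∂b_r/∂z_s)` on `U`, then each
function `c_{rs} = ∂b_r/∂z̄_s − ∂b_s/∂z̄_r` is antiholomorphic on `U`: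
all its Wirtinger derivatives `∂c_{rs}/∂z_t` vanish. -/
theorem samols_coefficients_antiholomorphic {N : ℕ}
    (U : Set (Fin N → ℂ)) (hU : IsOpen U)
    (b : Fin N → (Fin N → ℂ) → ℂ)
    (hb : ∀ r : Fin N, ContDiffOn ℝ 2 (b r) U)
    (hHerm : ∀ z ∈ U, ∀ r s : Fin N,
      wirtingerD r (b s) z = (starRingEnd ℂ) (wirtingerD s (b r) z)) :
    ∀ r s t : Fin N, ∀ z ∈ U,
      wirtingerD t
        (fun w => wirtingerDBar s (b r) w - wirtingerDBar r (b s) w) z = 0 := by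
  intro r s t z hz
  have hmem := hU.mem_nhds hz
  have hc : ∀ p : Fin N, ContDiffAt ℝ 2 (b p) z := fun p => (hb p).contDiffAt hmem
  have hsym : ∀ (p : Fin N) (u v : Fin N → ℂ),
      fderiv ℝ (fderiv ℝ (b p)) z u v = fderiv ℝ (fderiv ℝ (b p)) z v u :=
    fun p => (hc p).isSymmSndFDerivAt (by simp)
  -- differentiated hermiticity
  have H : ∀ p q : Fin N, ∀ u : Fin N → ℂ,
      (1/2 : ℂ) * (fderiv ℝ (fderiv ℝ (b q)) z u (Pi.single p 1)
        - Complex.I * fderiv ℝ (fderiv ℝ (b q)) z u (Pi.single p Complex.I))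
      = (starRingEnd ℂ) ((1/2 : ℂ) * (fderiv ℝ (fderiv ℝ (b p)) z u (Pi.single q 1)
        - Complex.I * fderiv ℝ (fderiv ℝ (b p)) z u (Pi.single q Complex.I))) := by
    intro p q u
    have heq : (fun w => wirtingerD p (b q) w) =ᶠ[nhds z]
        (fun w => (starRingEnd ℂ) (wirtingerD q (b p) w)) := by
      filter_upwards [hmem] with w hw
      exact hHerm w hw p q
    have hde := congrFun (congrArg DFunLike.coe (heq.fderiv_eq (𝕜 := ℝ))) u
    rw [fderiv_wirtingerD_apply (hc q) p u,
      fderiv_conj_apply ((hasFDerivAt_wirtingerD (hc p) q).differentiableAt) u,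
      fderiv_wirtingerD_apply (hc p) q u] at hde
    exact hde
  -- compute the fderiv of the difference
  have Hc := ((hasFDerivAt_wirtingerDBar (hc r) s).sub
    (hasFDerivAt_wirtingerDBar (hc s) r)).fderiv
  have hval : ∀ u : Fin N → ℂ,
      fderiv ℝ (fun w => wirtingerDBar s (b r) w - wirtingerDBar r (b s) w) z u
      = (1/2 : ℂ) * (fderiv ℝ (fderiv ℝ (b r)) z u (Pi.single s 1)
          + Complex.I * fderiv ℝ (fderiv ℝ (b r)) z u (Pi.single s Complex.I))
        - (1/2 : ℂ) * (fderiv ℝ (fderiv ℝ (b s)) z u (Pi.single r 1)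
          + Complex.I * fderiv ℝ (fderiv ℝ (b s)) z u (Pi.single r Complex.I)) := by
    intro u
    rw [show (fun w => wirtingerDBar s (b r) w - wirtingerDBar r (b s) w) = ((fun w => wirtingerDBar s (b r) w) - fun w => wirtingerDBar r (b s) w) from rfl, Hc]
    simp
    ring
  show (1 / 2 : ℂ) * (fderiv ℝ _ z (Pi.single t 1)
    - Complex.I * fderiv ℝ _ z (Pi.single t Complex.I)) = 0
  rw [hval (Pi.single t 1), hval (Pi.single t Complex.I)]
  have h1 := H t r (Pi.single s 1)
  have h2 := H t r (Pi.single s Complex.I)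
  have h3 := H t s (Pi.single r 1)
  have h4 := H t s (Pi.single r Complex.I)
  simp only [map_mul, map_sub, map_one, map_div₀, map_ofNat, Complex.conj_I] at h1 h2 h3 h4
  rw [hsym r (Pi.single t 1) (Pi.single s 1), hsym r (Pi.single t 1) (Pi.single s Complex.I),
    hsym r (Pi.single t Complex.I) (Pi.single s 1),
    hsym r (Pi.single t Complex.I) (Pi.single s Complex.I),
    hsym s (Pi.single t 1) (Pi.single r 1), hsym s (Pi.single t 1) (Pi.single r Complex.I),
    hsym s (Pi.single t Complex.I) (Pi.single r 1),
    hsym s (Pi.single t Complex.I) (Pi.single r Complex.I)]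
  rw [hsym t (Pi.single r 1) (Pi.single s 1),
    hsym t (Pi.single r 1) (Pi.single s Complex.I)] at h3
  rw [hsym t (Pi.single r Complex.I) (Pi.single s 1),
    hsym t (Pi.single r Complex.I) (Pi.single s Complex.I)] at h4
  linear_combination (1/2 : ℂ) * h1 + (Complex.I/2) * h2 - (1/2 : ℂ) * h3 - (Complex.I/2) * h4
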